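/- arXiv:2012.01413 — 5 statements merged into one kernel-verified Lean document; each statement's English description precedes it below -/
import Mathlib

section
/- Let m ≥ 1 be an integer, L, ε > 0 real, f(t) = (t−L)^m (L+ε−t)^m on [L, L+ε] and 0 otherwise, and F(s) = ∫_L^{L+ε} f(t) e^{−st} dt. Then for every complex s ≠ 0 with Re(s) = σ ≥ 0, |F(s)| ≤ √ε · e^{−σL} · ‖f^{(m)}‖₂ / |s|^m, where ‖f^{(m)}‖₂ is the L² norm of the m-th derivative of f on [L, L+ε]. -/
open MeasureTheory intervalIntegral Set

lemma iterDeriv_poly (p : Polynomial ℝ) (k : ℕ) :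
    iteratedDeriv k (fun x => p.eval x) = fun x => (Polynomial.derivative^[k] p).eval x := by
  induction k with
  | zero => simp
  | succ k ih =>
    rw [iteratedDeriv_succ, ih]
    funext x
    rw [Function.iterate_succ_apply']
    exact Polynomial.deriv _

lemma eval_iter_deriv_zero (a : ℝ) (q : Polynomial ℝ) {m k : ℕ} (hk : k < m)
    (hdvd : (Polynomial.X - Polynomial.C a) ^ m ∣ q) :
    (Polynomial.derivative^[k] q).eval a = 0 := by
  obtain ⟨r, hr⟩ := Polynomial.pow_sub_dvd_iterate_derivative_of_pow_dvd k hdvd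
  rw [hr]
  simp [zero_pow (by omega : m - k ≠ 0)]

theorem stmt_5 (m : ℕ) (hm : 1 ≤ m) (L ε : ℝ) (hL : 0 < L) (hε : 0 < ε)
    (f : ℝ → ℝ)
    (hf : ∀ t, f t = if t ∈ Set.Icc L (L + ε) then (t - L) ^ m * (L + ε - t) ^ m else 0)
    (F : ℂ → ℂ)
    (hF : ∀ s, F s = ∫ t in L..(L + ε), (f t : ℂ) * Complex.exp (-s * t)) :
    ∀ s : ℂ, s ≠ 0 → 0 ≤ s.re →
      ‖F s‖ ≤ Real.sqrt ε * Real.exp (-s.re * L)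
          * (∫ t in L..(L + ε), (iteratedDeriv m f t) ^ 2) ^ ((1 : ℝ) / 2) / ‖s‖ ^ m := by
  intro s hs hsre
  set b := L + ε with hb
  have hLb : L ≤ b := by simp [hb]; linarith
  set p : Polynomial ℝ := (Polynomial.X - Polynomial.C L) ^ m
      * (Polynomial.C b - Polynomial.X) ^ m with hp
  have hpeval : ∀ t, p.eval t = (t - L) ^ m * (b - t) ^ m := by intro t; simp [hp]
  set q : ℕ → Polynomial ℝ := fun k => Polynomial.derivative^[k] p with hq
  -- divisibility at both endpoints
  have hdvdL : (Polynomial.X - Polynomial.C L) ^ m ∣ p := Dvd.intro _ rfl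
  have hdvdb : (Polynomial.X - Polynomial.C b) ^ m ∣ p := by
    refine dvd_mul_of_dvd_right (pow_dvd_pow_of_dvd ⟨-1, by ring⟩ m) _
  -- boundary values vanish
  have hqL : ∀ k, k < m → (q k).eval L = 0 := fun k hk => eval_iter_deriv_zero L p hk hdvdL
  have hqb : ∀ k, k < m → (q k).eval b = 0 := fun k hk => eval_iter_deriv_zero b p hk hdvdb
  set I : ℕ → ℂ := fun k => ∫ t in L..b, (((q k).eval t : ℝ) : ℂ) * Complex.exp (-s * t) with hI
  have hcont : ∀ k, Continuous fun t : ℝ => (((q k).eval t : ℝ) : ℂ) * Complex.exp (-s * t) := by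
    intro k
    have h1 : Continuous fun t : ℝ => (((q k).eval t : ℝ) : ℂ) :=
      Complex.continuous_ofReal.comp (q k).continuous
    exact h1.mul (Complex.continuous_exp.comp (continuous_const.mul Complex.continuous_ofReal))
  have key : ∀ k, k < m → I (k + 1) = s * I k := by
    intro k hk
    have hderiv : ∀ t : ℝ, HasDerivAt (fun t : ℝ => (((q k).eval t : ℝ) : ℂ) * Complex.exp (-s * t))
        ((((q (k+1)).eval t : ℝ) : ℂ) * Complex.exp (-s * t)
          + (((q k).eval t : ℝ) : ℂ) * (Complex.exp (-s * t) * -s)) t := by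
      intro t
      have h1 : HasDerivAt (fun t : ℝ => (((q k).eval t : ℝ) : ℂ)) (((q (k+1)).eval t : ℝ) : ℂ) t := by
        have := (Polynomial.hasDerivAt (q k) t).ofReal_comp
        rwa [show (Polynomial.derivative (q k)) = q (k+1) from
          (Function.iterate_succ_apply' _ _ _).symm] at this
      have ha : HasDerivAt (fun t : ℝ => -s * (t : ℂ)) (-s) t := by
        simpa using (Complex.ofRealCLM.hasDerivAt (x := t)).const_mul (-s)
      exact h1.mul ha.cexp
    have ftc := intervalIntegral.integral_eq_sub_of_hasDerivAt
      (f := fun t : ℝ => (((q k).eval t : ℝ) : ℂ) * Complex.exp (-s * t))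
      (a := L) (b := b) (fun t _ => hderiv t)
      (by
        apply Continuous.intervalIntegrable
        have h1 : Continuous fun t : ℝ => (((q k).eval t : ℝ) : ℂ) :=
          Complex.continuous_ofReal.comp (q k).continuous
        have h2 : Continuous fun t : ℝ => Complex.exp (-s * t) * -s :=
          (Complex.continuous_exp.comp
            (continuous_const.mul Complex.continuous_ofReal)).mul continuous_const
        exact (hcont (k+1)).add (h1.mul h2))
    simp only [hqL k hk, hqb k hk, Complex.ofReal_zero, zero_mul, sub_zero] at ftc
    have hsplit : (∫ t in L..b, ((((q (k+1)).eval t : ℝ) : ℂ) * Complex.exp (-s * t)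
          + (((q k).eval t : ℝ) : ℂ) * (Complex.exp (-s * t) * -s)))
        = I (k+1) + (-s) * I k := by
      simp only [hI]
      have int2 : IntervalIntegrable
          (fun t : ℝ => (((q k).eval t : ℝ) : ℂ) * (Complex.exp (-s * t) * -s))
          MeasureTheory.volume L b := by
        apply Continuous.intervalIntegrable
        have h1 : Continuous fun t : ℝ => (((q k).eval t : ℝ) : ℂ) :=
          Complex.continuous_ofReal.comp (q k).continuous
        have h2 : Continuous fun t : ℝ => Complex.exp (-s * t) * -s :=
          (Complex.continuous_exp.comp
            (continuous_const.mul Complex.continuous_ofReal)).mul continuous_const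
        exact h1.mul h2
      rw [intervalIntegral.integral_add ((hcont (k+1)).intervalIntegrable _ _) int2,
        ← intervalIntegral.integral_const_mul]
      congr 1
      apply intervalIntegral.integral_congr
      intro t _
      ring
    rw [hsplit] at ftc
    linear_combination ftc
  have hI0 : I 0 = F s := by
    rw [hF]
    apply intervalIntegral.integral_congr
    intro t ht
    rw [Set.uIcc_of_le hLb] at ht
    show (((q 0).eval t : ℝ) : ℂ) * Complex.exp (-s * t) = (f t : ℂ) * Complex.exp (-s * t)
    rw [hf t, if_pos ht]
    have : (q 0).eval t = (t - L) ^ m * (b - t) ^ m := by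
      rw [hq]; simpa using hpeval t
    rw [this]
  have hIm : I m = s ^ m * F s := by
    rw [← hI0]
    clear hI0
    have : ∀ k, k ≤ m → I k = s ^ k * I 0 := by
      intro k hk
      induction k with
      | zero => simp
      | succ k ih =>
        rw [key k (by omega), ih (by omega)]
        ring
    exact this m le_rfl
  -- identify the integral in the RHS of the goal
  have hIoo : ∀ t ∈ Set.Ioo L b, iteratedDeriv m f t = (q m).eval t := by
    intro t ht
    have hfg : f =ᶠ[nhds t] fun x => p.eval x := by
      filter_upwards [Ioo_mem_nhds ht.1 ht.2] with x hx
      rw [hf x, if_pos (Set.Ioo_subset_Icc_self hx)]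
      exact (hpeval x).symm
    rw [hfg.iteratedDeriv_eq m, iterDeriv_poly]
  have hint_eq : (∫ t in L..b, (iteratedDeriv m f t) ^ 2)
      = ∫ t in L..b, ((q m).eval t) ^ 2 := by
    apply intervalIntegral.integral_congr_ae
    have hbne : ∀ᵐ x : ℝ, x ≠ b := by
      rw [MeasureTheory.ae_iff]
      convert Real.volume_singleton (a := b) using 2
      ext x; simp
    filter_upwards [hbne] with x hx hxmem
    rw [Set.uIoc_of_le hLb] at hxmem
    rw [hIoo x ⟨hxmem.1, lt_of_le_of_ne hxmem.2 hx⟩]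
  -- express ‖F s‖ via I m
  have hFeq : ‖F s‖ = ‖I m‖ / ‖s‖ ^ m := by
    have hd : F s = I m / s ^ m := by
      rw [eq_div_iff (pow_ne_zero m hs)]; linear_combination -hIm
    rw [hd, norm_div, norm_pow]
  -- pointwise norm bound
  have h1 : ‖I m‖ ≤ ∫ t in L..b, ‖(((q m).eval t : ℝ) : ℂ) * Complex.exp (-s * t)‖ := by
    simp only [hI]
    exact intervalIntegral.norm_integral_le_integral_norm hLb
  have h2 : (∫ t in L..b, ‖(((q m).eval t : ℝ) : ℂ) * Complex.exp (-s * t)‖)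
      ≤ ∫ t in L..b, Real.exp (-s.re * L) * |(q m).eval t| := by
    apply intervalIntegral.integral_mono_on hLb
    · exact ((hcont m).norm).intervalIntegrable _ _
    · exact (continuous_const.mul ((q m).continuous.abs)).intervalIntegrable _ _
    · intro t ht
      have hre : (-s * (t : ℂ)).re = -s.re * t := by
        simp [Complex.mul_re]
      rw [norm_mul, Complex.norm_real, Real.norm_eq_abs,
        Complex.norm_exp, hre, mul_comm (Real.exp (-s.re * L))]
      have hmono : Real.exp (-s.re * t) ≤ Real.exp (-s.re * L) :=
        Real.exp_le_exp.mpr (by nlinarith [ht.1, hsre, mul_le_mul_of_nonneg_left ht.1 hsre])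
      exact mul_le_mul_of_nonneg_left hmono (abs_nonneg _)
  have h3 : (∫ t in L..b, Real.exp (-s.re * L) * |(q m).eval t|)
      = Real.exp (-s.re * L) * ∫ t in L..b, |(q m).eval t| :=
    intervalIntegral.integral_const_mul _ _
  -- Cauchy–Schwarz
  have hCS : (∫ t in L..b, |(q m).eval t|)
      ≤ Real.sqrt ε * (∫ t in L..b, ((q m).eval t) ^ 2) ^ ((1:ℝ)/2) := by
    rw [intervalIntegral.integral_of_le hLb, intervalIntegral.integral_of_le hLb]
    set μ := MeasureTheory.volume.restrict (Set.Ioc L b) with hμ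
    haveI : MeasureTheory.IsFiniteMeasure μ := by
      constructor
      rw [hμ, MeasureTheory.Measure.restrict_apply_univ]
      rw [Real.volume_Ioc]
      exact ENNReal.ofReal_lt_top
    obtain ⟨C, hC⟩ := (isCompact_Icc (a := L) (b := b)).exists_bound_of_continuousOn
      ((q m).continuous.abs.continuousOn)
    have haemeas : MeasureTheory.AEStronglyMeasurable (fun t => |(q m).eval t|) μ :=
      ((q m).continuous.abs).aestronglyMeasurable
    have hmem : MeasureTheory.MemLp (fun t => |(q m).eval t|) (ENNReal.ofReal 2) μ := by
      refine MeasureTheory.MemLp.of_bound haemeas C ?_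
      rw [hμ, MeasureTheory.ae_restrict_iff' measurableSet_Ioc]
      exact Filter.Eventually.of_forall fun x hx => hC x (Set.Ioc_subset_Icc_self hx)
    have hone : MeasureTheory.MemLp (fun _ : ℝ => (1:ℝ)) (ENNReal.ofReal 2) μ :=
      MeasureTheory.memLp_const 1
    have hconj : (2:ℝ).HolderConjugate 2 := ⟨by norm_num, by norm_num, by norm_num⟩
    have := MeasureTheory.integral_mul_le_Lp_mul_Lq_of_nonneg hconj
      (Filter.Eventually.of_forall fun x => abs_nonneg _)
      (Filter.Eventually.of_forall fun _ => zero_le_one) hmem hone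
    simp only [mul_one, one_pow] at this
    have e1 : (∫ a, |(q m).eval a| ^ (2:ℝ) ∂μ) = ∫ a, ((q m).eval a) ^ 2 ∂μ := by
      apply MeasureTheory.integral_congr_ae
      refine Filter.Eventually.of_forall fun x => ?_
      show |(q m).eval x| ^ (2:ℝ) = ((q m).eval x) ^ 2
      rw [show ((2:ℝ)) = ((2:ℕ):ℝ) by norm_num, Real.rpow_natCast]
      exact sq_abs _
    have e2 : (∫ _ : ℝ, (1:ℝ) ^ (2:ℝ) ∂μ) = ε := by
      simp only [Real.one_rpow]
      rw [MeasureTheory.integral_const, smul_eq_mul, mul_one, hμ, MeasureTheory.measureReal_def,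
        MeasureTheory.Measure.restrict_apply_univ, Real.volume_Ioc]
      rw [ENNReal.toReal_ofReal (by linarith)]
      simp [hb]
    rw [e1, e2] at this
    calc (∫ t in Set.Ioc L b, |(q m).eval t|)
        ≤ (∫ a in Set.Ioc L b, ((q m).eval a) ^ 2) ^ ((1:ℝ)/2) * ε ^ ((1:ℝ)/2) := this
      _ = Real.sqrt ε * (∫ a in Set.Ioc L b, ((q m).eval a) ^ 2) ^ ((1:ℝ)/2) := by
          rw [Real.sqrt_eq_rpow]; ring
  -- put everything together
  rw [hint_eq, hFeq]
  gcongr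
  calc ‖I m‖ ≤ ∫ t in L..b, ‖(((q m).eval t : ℝ) : ℂ) * Complex.exp (-s * t)‖ := h1
    _ ≤ ∫ t in L..b, Real.exp (-s.re * L) * |(q m).eval t| := h2
    _ = Real.exp (-s.re * L) * ∫ t in L..b, |(q m).eval t| := h3
    _ ≤ Real.exp (-s.re * L) * (Real.sqrt ε * (∫ t in L..b, ((q m).eval t) ^ 2) ^ ((1:ℝ)/2)) :=
        mul_le_mul_of_nonneg_left hCS (Real.exp_pos _).le
    _ = Real.sqrt ε * Real.exp (-s.re * L) * (∫ t in L..b, ((q m).eval t) ^ 2) ^ ((1:ℝ)/2) := by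
        ring
end

section
/- Let m be a positive integer and f(t) = (t−L)^m (L+ε−t)^m on [L, L+ε], 0 otherwise. Then the ratio ‖f^{(m)}‖₂ / ‖f‖₁ = μ_m / ε^{m+1/2}, where μ_m = (2m+1)! / (m! √(2m+1)). -/
open Polynomial intervalIntegral MeasureTheory

lemma dvd_deriv_aux (c : ℝ) (n : ℕ) (p : ℝ[X]) (h : (X - C c)^(n+1) ∣ p) :
    (X - C c)^n ∣ derivative p := by
  obtain ⟨q, rfl⟩ := h
  rw [derivative_mul, derivative_X_sub_C_pow]
  simp only [Nat.add_sub_cancel, Nat.cast_add, Nat.cast_one]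
  exact dvd_add (((dvd_refl _).mul_left _).mul_right _) ((pow_dvd_pow _ n.le_succ).mul_right _)

lemma iteratedDeriv_eval (n : ℕ) (p : ℝ[X]) :
    iteratedDeriv n (fun x => p.eval x) = fun x => (derivative^[n] p).eval x := by
  induction n generalizing p with
  | zero => simp
  | succ n ih =>
    have h : deriv (fun x => p.eval x) = fun x => (derivative p).eval x :=
      funext fun x => Polynomial.deriv p
    rw [iteratedDeriv_succ', h, ih, Function.iterate_succ_apply]

lemma ibp_poly (p q : ℝ[X]) (a b : ℝ) :
    ∫ x in a..b, (derivative p).eval x * q.eval x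
      = p.eval b * q.eval b - p.eval a * q.eval a
        - ∫ x in a..b, p.eval x * (derivative q).eval x := by
  have h := intervalIntegral.integral_mul_deriv_eq_deriv_mul (a := a) (b := b)
    (u := fun x => q.eval x) (v := fun x => p.eval x)
    (u' := fun x => (derivative q).eval x) (v' := fun x => (derivative p).eval x)
    (fun x _ => q.hasDerivAt x) (fun x _ => p.hasDerivAt x)
    (((derivative q).continuous_aeval).intervalIntegrable _ _)
    (((derivative p).continuous_aeval).intervalIntegrable _ _)
  calc ∫ x in a..b, (derivative p).eval x * q.eval x
      = ∫ x in a..b, q.eval x * (derivative p).eval x := by simp [mul_comm]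
    _ = p.eval b * q.eval b - p.eval a * q.eval a
        - ∫ x in a..b, p.eval x * (derivative q).eval x := by
        have h2 : (∫ x in a..b, (derivative q).eval x * p.eval x)
            = ∫ x in a..b, p.eval x * (derivative q).eval x :=
          intervalIntegral.integral_congr fun x _ => mul_comm _ _
        rw [h, h2]; ring

lemma beta_int (L ε : ℝ) : ∀ (b a : ℕ),
    (∫ t in L..(L+ε), (t-L)^a * (L+ε-t)^b)
      = ((a.factorial : ℝ) * b.factorial / (a+b+1).factorial) * ε^(a+b+1) := by
  intro b
  induction b with
  | zero =>
    intro a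
    simp only [pow_zero, mul_one]
    have h : (∫ t in L..(L+ε), (t-L)^a) = ∫ x in (L-L)..(L+ε-L), x^a :=
      (intervalIntegral.integral_comp_sub_right (fun x => x^a) L)
    rw [h]
    simp only [sub_self, add_sub_cancel_left, integral_pow]
    have ha : ((a+1).factorial : ℝ) = (a+1) * a.factorial := by
      rw [Nat.factorial_succ]; push_cast; ring
    have : ((a:ℝ)+1) ≠ 0 := by positivity
    rw [Nat.add_zero, ha]
    field_simp
    ring
  | succ b ih =>
    intro a
    have hu : ∀ t ∈ Set.uIcc L (L+ε), HasDerivAt (fun t => (t-L)^(a+1))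
        (((a:ℝ)+1) * (t-L)^a) t := by
      intro t _
      have := ((hasDerivAt_id t).sub_const L).fun_pow (a+1)
      simpa using this
    have hv : ∀ t ∈ Set.uIcc L (L+ε), HasDerivAt (fun t => (L+ε-t)^(b+1))
        (-(((b:ℝ)+1) * (L+ε-t)^b)) t := by
      intro t _
      have := ((hasDerivAt_id t).const_sub (L+ε)).fun_pow (b+1)
      simpa using this
    have hic : IntervalIntegrable (fun t => ((a:ℝ)+1) * (t-L)^a) volume L (L+ε) := by
      apply Continuous.intervalIntegrable; continuity
    have hic2 : IntervalIntegrable (fun t => -(((b:ℝ)+1) * (L+ε-t)^b)) volume L (L+ε) := by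
      apply Continuous.intervalIntegrable; continuity
    have key := intervalIntegral.integral_mul_deriv_eq_deriv_mul hu hv hic hic2
    simp only [sub_self, zero_pow (Nat.succ_ne_zero a), zero_mul, mul_zero,
      add_sub_cancel_left, zero_pow (Nat.succ_ne_zero b), sub_zero, zero_sub] at key
    -- key : ∫ (t-L)^(a+1) * -((b+1)(L+ε-t)^b) = - ∫ (a+1)(t-L)^a * (L+ε-t)^(b+1)
    have k1 : (∫ t in L..(L+ε), (t-L)^(a+1) * -(((b:ℝ)+1) * (L+ε-t)^b))
        = -((b:ℝ)+1) * ∫ t in L..(L+ε), (t-L)^(a+1) * (L+ε-t)^b := by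
      rw [← intervalIntegral.integral_const_mul]
      apply intervalIntegral.integral_congr
      intro x _; ring
    have k2 : (∫ t in L..(L+ε), ((a:ℝ)+1) * (t-L)^a * (L+ε-t)^(b+1))
        = ((a:ℝ)+1) * ∫ t in L..(L+ε), (t-L)^a * (L+ε-t)^(b+1) := by
      rw [← intervalIntegral.integral_const_mul]
      apply intervalIntegral.integral_congr
      intro x _; ring
    rw [k1, k2, ih (a+1)] at key
    have ha : ((a:ℝ)+1) ≠ 0 := by positivity
    have hfacs : ((a+1+b+1).factorial : ℝ) ≠ 0 := by positivity
    -- solve for target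
    have expand : ((a+(b+1)+1).factorial : ℝ) = ((a+1)+b+1).factorial := by norm_num; ring_nf
    have e1 : ((a+1).factorial : ℝ) = ((a:ℝ)+1) * a.factorial := by
      rw [Nat.factorial_succ]; push_cast; ring
    have e2 : ((b+1).factorial : ℝ) = ((b:ℝ)+1) * b.factorial := by
      rw [Nat.factorial_succ]; push_cast; ring
    have : ((a:ℝ)+1) * (∫ t in L..(L+ε), (t-L)^a * (L+ε-t)^(b+1))
        = ((b:ℝ)+1) * (((a+1).factorial : ℝ) * b.factorial / ((a+1)+b+1).factorial * ε^((a+1)+b+1)) := by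
      linarith [key]
    have goalv : (∫ t in L..(L+ε), (t-L)^a * (L+ε-t)^(b+1))
        = ((b:ℝ)+1) * (((a+1).factorial : ℝ) * b.factorial / ((a+1)+b+1).factorial * ε^((a+1)+b+1)) / ((a:ℝ)+1) := by
      field_simp at this ⊢
      linarith [this]
    rw [goalv, expand, e1, e2]
    have : ε^(a+(b+1)+1) = ε^((a+1)+b+1) := by ring_nf
    rw [this]
    field_simp


lemma dvd_iterate (c : ℝ) (m : ℕ) (p : ℝ[X]) (h : (X - C c)^m ∣ p) :
    ∀ k, (X - C c)^(m-k) ∣ derivative^[k] p := by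
  intro k
  induction k with
  | zero => simpa using h
  | succ k ih =>
    rw [Function.iterate_succ_apply']
    rcases Nat.lt_or_ge k m with hk | hk
    · have e : m - k = (m - (k+1)) + 1 := by omega
      rw [e] at ih
      exact dvd_deriv_aux _ _ _ ih
    · have e : m - (k+1) = 0 := by omega
      rw [e, pow_zero]; exact one_dvd _

lemma eval_zero_of_dvd (c : ℝ) (n : ℕ) (hn : 0 < n) (p : ℝ[X]) (h : (X - C c)^n ∣ p) :
    p.eval c = 0 := by
  obtain ⟨r, rfl⟩ := h
  simp [zero_pow hn.ne']

lemma iter_2m (m : ℕ) (L ε : ℝ) :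
    derivative^[2*m] ((X - C L)^m * (C (L+ε) - X)^m : ℝ[X])
      = C ((-1 : ℝ)^m * (2*m).factorial) := by
  set P : ℝ[X] := (X - C L)^m * (C (L+ε) - X)^m with hPdef
  have hd1 : (C (L+ε) - X : ℝ[X]) = -(X - C (L+ε)) := by ring
  have hne2 : ((C (L+ε) - X : ℝ[X]))^m ≠ 0 := by
    rw [hd1]
    exact pow_ne_zero _ (neg_ne_zero.mpr (X_sub_C_ne_zero _))
  have hdeg : P.natDegree = 2*m := by
    rw [hPdef, natDegree_mul (pow_ne_zero _ (X_sub_C_ne_zero L)) hne2,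
      natDegree_pow, natDegree_pow, natDegree_X_sub_C, hd1, natDegree_neg,
      natDegree_X_sub_C]
    ring
  have hlc : P.leadingCoeff = (-1 : ℝ)^m := by
    rw [hPdef, leadingCoeff_mul, leadingCoeff_pow, leadingCoeff_pow,
      (monic_X_sub_C L).leadingCoeff, hd1, leadingCoeff_neg,
      (monic_X_sub_C (L+ε)).leadingCoeff]
    simp
  have h0 : (derivative^[2*m] P).natDegree ≤ 0 := by
    calc (derivative^[2*m] P).natDegree ≤ P.natDegree - 2*m :=
          natDegree_iterate_derivative _ _
    _ = 0 := by rw [hdeg]; omega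
  rw [eq_C_of_natDegree_le_zero h0]
  congr 1
  rw [coeff_iterate_derivative]
  rw [zero_add, Nat.descFactorial_self, nsmul_eq_mul, ← hdeg, coeff_natDegree, hlc]
  ring


lemma sq_deriv_int (m : ℕ) (L ε : ℝ) :
    (∫ t in L..(L+ε), ((derivative^[m] ((X - C L)^m * (C (L+ε) - X)^m : ℝ[X])).eval t)^2)
      = ((2*m).factorial : ℝ) * ∫ t in L..(L+ε), ((X - C L)^m * (C (L+ε) - X)^m : ℝ[X]).eval t := by
  set P : ℝ[X] := (X - C L)^m * (C (L+ε) - X)^m with hPdef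
  have hdvdL : (X - C L)^m ∣ P := dvd_mul_right _ _
  have hdvdR : (X - C (L+ε))^m ∣ P := by
    apply dvd_mul_of_dvd_right
    exact pow_dvd_pow_of_dvd ⟨-1, by ring⟩ m
  have hvanish : ∀ k, k < m →
      (derivative^[k] P).eval L = 0 ∧ (derivative^[k] P).eval (L+ε) = 0 := by
    intro k hk
    exact ⟨eval_zero_of_dvd L (m-k) (by omega) _ (dvd_iterate L m P hdvdL k),
      eval_zero_of_dvd (L+ε) (m-k) (by omega) _ (dvd_iterate (L+ε) m P hdvdR k)⟩
  have main : ∀ j, j ≤ m →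
      (∫ t in L..(L+ε), (derivative^[m+j] P).eval t * (derivative^[m-j] P).eval t)
        = (-1:ℝ)^j * ∫ t in L..(L+ε), ((derivative^[m] P).eval t)^2 := by
    intro j
    induction j with
    | zero =>
      intro _
      simp only [Nat.add_zero, Nat.sub_zero, pow_zero, one_mul]
      apply intervalIntegral.integral_congr; intro x _; ring
    | succ j ih =>
      intro hj
      have e1 : m + (j+1) = (m+j) + 1 := by omega
      have e2 : m - j = (m-(j+1)) + 1 := by omega
      rw [e1, Function.iterate_succ_apply',
        ibp_poly (derivative^[m+j] P) (derivative^[m-(j+1)] P) L (L+ε),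
        (hvanish (m-(j+1)) (by omega)).1, (hvanish (m-(j+1)) (by omega)).2]
      have e3 : derivative (derivative^[m-(j+1)] P) = derivative^[m-j] P := by
        rw [e2, Function.iterate_succ_apply']
      rw [e3, ih (by omega)]
      ring
  have fin := main m le_rfl
  rw [Nat.sub_self, Function.iterate_zero_apply, show m + m = 2*m by ring, iter_2m] at fin
  have lhsfin : (∫ t in L..(L+ε), (C ((-1 : ℝ)^m * (2*m).factorial)).eval t * P.eval t)
      = (-1:ℝ)^m * (((2*m).factorial : ℝ) * ∫ t in L..(L+ε), P.eval t) := by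
    rw [← intervalIntegral.integral_const_mul, ← intervalIntegral.integral_const_mul]
    apply intervalIntegral.integral_congr; intro x _; simp; ring
  rw [lhsfin] at fin
  exact (mul_left_cancel₀ (pow_ne_zero m (by norm_num : (-1:ℝ) ≠ 0)) fin).symm

theorem stmt_6 (m : ℕ) (hm : 0 < m) (L ε : ℝ) (hL : 0 < L) (hε : 0 < ε)
    (f : ℝ → ℝ)
    (hf : ∀ t, f t = if t ∈ Set.Icc L (L + ε) then (t - L) ^ m * (L + ε - t) ^ m else 0) :
    (∫ t in L..(L + ε), (iteratedDeriv m f t) ^ 2) ^ ((1 : ℝ) / 2)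
        / (∫ t in L..(L + ε), f t)
      = ((Nat.factorial (2 * m + 1) : ℝ)
          / ((Nat.factorial m : ℝ) * Real.sqrt (2 * m + 1)))
        / ε ^ ((m : ℝ) + 1 / 2) := by
  set P : ℝ[X] := (X - C L)^m * (C (L+ε) - X)^m with hPdef
  have heval : ∀ t : ℝ, P.eval t = (t-L)^m * (L+ε-t)^m := by
    intro t; simp [hPdef]
  have hle : L ≤ L + ε := by linarith
  -- denominator
  have hA : (∫ t in L..(L+ε), f t)
      = (m.factorial : ℝ) * m.factorial / (2*m+1).factorial * ε^(2*m+1) := by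
    rw [intervalIntegral.integral_congr
      (g := fun t => (t-L)^m * (L+ε-t)^m)
      (fun x hx => by
        rw [hf x, if_pos]
        exact (Set.uIcc_of_le hle ▸ hx))]
    have hb := beta_int L ε m m
    rw [show m + m + 1 = 2*m+1 by ring] at hb
    rw [hb]
  -- numerator reduction to polynomial
  have hB : (∫ t in L..(L + ε), (iteratedDeriv m f t) ^ 2)
      = ∫ t in L..(L+ε), ((derivative^[m] P).eval t)^2 := by
    apply intervalIntegral.integral_congr_ae
    have hne : ∀ᵐ (x : ℝ), x ≠ L + ε :=
      compl_mem_ae_iff.mpr (measure_singleton _)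
    filter_upwards [hne] with x hx hxI
    rw [Set.uIoc_of_le hle] at hxI
    have hxo : x ∈ Set.Ioo L (L+ε) := ⟨hxI.1, lt_of_le_of_ne hxI.2 hx⟩
    have hev : f =ᶠ[nhds x] fun y => P.eval y := by
      filter_upwards [Ioo_mem_nhds hxo.1 hxo.2] with y hy
      rw [hf y, if_pos (Set.mem_Icc_of_Ioo hy), heval y]
    rw [hev.iteratedDeriv_eq m, iteratedDeriv_eval]
  rw [hA, hB, sq_deriv_int m L ε]
  rw [intervalIntegral.integral_congr (g := fun t : ℝ => (t-L)^m * (L+ε-t)^m)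
    (fun x _ => heval x)]
  have hb := beta_int L ε m m
  rw [show m + m + 1 = 2*m+1 by ring] at hb
  rw [hb]
  -- pure algebra now
  set s : ℝ := ε ^ ((m : ℝ) + 1/2) with hs
  have hspos : 0 < s := Real.rpow_pos_of_pos hε _
  have hs2 : s^2 = ε^(2*m+1) := by
    rw [sq, hs, ← Real.rpow_add hε, ← Real.rpow_natCast ε (2*m+1)]
    congr 1
    push_cast; ring
  have hfacm : (0:ℝ) < m.factorial := by positivity
  have hfac2m1 : ((2*m+1).factorial : ℝ) = (2*m+1) * (2*m).factorial := by
    rw [Nat.factorial_succ]; push_cast; ring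
  have hcpos : (0:ℝ) < 2*(m:ℝ)+1 := by positivity
  have hsqrtpos : 0 < Real.sqrt (2*(m:ℝ)+1) := Real.sqrt_pos.mpr hcpos
  have hN : ((2*m).factorial : ℝ) * ((m.factorial : ℝ) * m.factorial / (2*m+1).factorial * ε^(2*m+1))
      = ((m.factorial : ℝ) * s)^2 / (2*(m:ℝ)+1) := by
    rw [← hs2, hfac2m1]
    have h2m : ((2*m).factorial : ℝ) ≠ 0 := by positivity
    push_cast
    field_simp
  rw [hN, ← Real.sqrt_eq_rpow, Real.sqrt_div (sq_nonneg _), Real.sqrt_sq (by positivity)]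
  rw [hfac2m1]
  have hsq : Real.sqrt (2*(m:ℝ)+1) * Real.sqrt (2*(m:ℝ)+1) = 2*(m:ℝ)+1 :=
    Real.mul_self_sqrt hcpos.le
  have h2m0 : ((2*m).factorial:ℝ) ≠ 0 := by positivity
  have hε2 : (0:ℝ) < ε ^ (2*m+1) := by positivity
  rw [show ε ^ (2*m+1) = s^2 from hs2.symm]
  rw [div_div, div_eq_div_iff (by positivity) (by positivity)]
  field_simp
end

section
/- For all real x ≥ 2, the sum over primes p ≤ x of log p / (p − 1) is at most 2 log x. -/
lemma prod_primepow_dvd (s : Finset ℕ) (e : ℕ → ℕ) (n : ℕ)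
    (hs : ∀ p ∈ s, p.Prime) (h : ∀ p ∈ s, p ^ e p ∣ n) :
    (∏ p ∈ s, p ^ e p) ∣ n := by
  induction s using Finset.induction with
  | empty => simp
  | @insert a s ha ih =>
    rw [Finset.prod_insert ha]
    have hcop : Nat.Coprime (a ^ e a) (∏ p ∈ s, p ^ e p) := by
      apply Nat.Coprime.pow_left
      apply Nat.Coprime.prod_right
      intro q hq
      apply Nat.Coprime.pow_right
      exact (Nat.coprime_primes (hs a (Finset.mem_insert_self a s))
        (hs q (Finset.mem_insert_of_mem hq))).mpr (fun hne => ha (hne ▸ hq))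
    exact hcop.mul_dvd_of_dvd_of_dvd (h a (Finset.mem_insert_self a s))
      (ih (fun p hp => hs p (Finset.mem_insert_of_mem hp))
          (fun p hp => h p (Finset.mem_insert_of_mem hp)))

lemma pow_div_dvd_factorial {p N : ℕ} (hp : p.Prime) :
    p ^ (N / p) ∣ Nat.factorial N := by
  rcases Nat.eq_zero_or_pos N with h | h
  · simp [h, Nat.div_eq_of_lt hp.pos]
  rw [Nat.Prime.pow_dvd_factorial_iff hp (Nat.lt_succ_self _)]
  rcases le_or_gt p N with hpN | hpN
  · calc N / p = N / p ^ 1 := by rw [pow_one]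
      _ ≤ ∑ i ∈ Finset.Ico 1 (Nat.log p N + 1), N / p ^ i := by
        apply Finset.single_le_sum (f := fun i => N / p ^ i)
        · intro i _; exact Nat.zero_le _
        · rw [Finset.mem_Ico]
          have := Nat.log_pos hp.one_lt hpN
          omega
  · simp [Nat.div_eq_of_lt hpN]


lemma primes_eq (N : ℕ) :
    Finset.filter Nat.Prime (Finset.Icc 2 N) = Finset.filter Nat.Prime (Finset.range (N+1)) := by
  ext p
  simp only [Finset.mem_filter, Finset.mem_Icc, Finset.mem_range, Nat.lt_succ_iff]
  exact ⟨fun h => ⟨h.1.2, h.2⟩, fun h => ⟨⟨h.2.two_le, h.1⟩, h.2⟩⟩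

lemma theta_le (N : ℕ) :
    ∑ p ∈ Finset.filter Nat.Prime (Finset.Icc 2 N), Real.log p ≤ N * Real.log 4 := by
  have h1 : ∑ p ∈ Finset.filter Nat.Prime (Finset.Icc 2 N), Real.log p
      = Real.log (∏ p ∈ Finset.filter Nat.Prime (Finset.Icc 2 N), (p:ℝ)) := by
    rw [Real.log_prod]
    intro p hp
    simp only [Finset.mem_filter] at hp
    exact_mod_cast hp.2.pos.ne'
  rw [h1]
  have h2 : (∏ p ∈ Finset.filter Nat.Prime (Finset.Icc 2 N), (p:ℝ))
      = ((primorial N : ℕ) : ℝ) := by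
    rw [primorial, ← primes_eq]
    push_cast
    rfl
  rw [h2]
  calc Real.log ((primorial N : ℕ) : ℝ) ≤ Real.log ((4:ℝ)^N) := by
        apply Real.log_le_log (by exact_mod_cast primorial_pos N)
        exact_mod_cast primorial_le_4_pow N
    _ = N * Real.log 4 := by rw [Real.log_pow]

lemma log_fact_lower (N : ℕ) :
    ∑ p ∈ Finset.filter Nat.Prime (Finset.Icc 2 N), ((N / p : ℕ) : ℝ) * Real.log p
      ≤ Real.log (Nat.factorial N) := by
  set s := Finset.filter Nat.Prime (Finset.Icc 2 N) with hs
  have hprime : ∀ p ∈ s, p.Prime := fun p hp => (Finset.mem_filter.1 hp).2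
  have hdvd : (∏ p ∈ s, p ^ (N / p)) ∣ Nat.factorial N :=
    prod_primepow_dvd s (fun p => N / p) _ hprime (fun p hp => pow_div_dvd_factorial (hprime p hp))
  have hle : ((∏ p ∈ s, p ^ (N / p) : ℕ) : ℝ) ≤ (Nat.factorial N : ℝ) := by
    exact_mod_cast Nat.le_of_dvd (Nat.factorial_pos N) hdvd
  have hpos : 0 < (∏ p ∈ s, p ^ (N / p) : ℕ) :=
    Finset.prod_pos fun p hp => pow_pos (hprime p hp).pos _
  have hlog := Real.log_le_log (by exact_mod_cast hpos) hle
  calc ∑ p ∈ s, ((N / p : ℕ) : ℝ) * Real.log p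
      = Real.log ((∏ p ∈ s, p ^ (N / p) : ℕ) : ℝ) := by
        push_cast
        rw [Real.log_prod]
        · exact Finset.sum_congr rfl fun p hp => (Real.log_pow _ _).symm
        · intro p hp
          have := (hprime p hp).pos
          positivity
    _ ≤ Real.log (Nat.factorial N) := hlog

lemma A_bound (N : ℕ) (hN : 1 ≤ N) :
    ∑ p ∈ Finset.filter Nat.Prime (Finset.Icc 2 N), Real.log p / p
      ≤ Real.log N + Real.log 4 := by
  set s := Finset.filter Nat.Prime (Finset.Icc 2 N) with hs
  have hNpos : (0:ℝ) < N := by exact_mod_cast hN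
  rw [← mul_le_mul_iff_right₀ hNpos]
  have key : (N:ℝ) * ∑ p ∈ s, Real.log p / p
      ≤ ∑ p ∈ s, ((N / p : ℕ) : ℝ) * Real.log p + ∑ p ∈ s, Real.log p := by
    rw [Finset.mul_sum, ← Finset.sum_add_distrib]
    apply Finset.sum_le_sum
    intro p hp
    have hp2 := (Finset.mem_filter.1 hp).2.two_le
    have hppos : (0:ℝ) < p := by exact_mod_cast (Finset.mem_filter.1 hp).2.pos
    have hlogp : (0:ℝ) ≤ Real.log p := Real.log_nonneg (by exact_mod_cast Nat.one_le_of_lt hp2)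
    have hfloor : (N:ℝ) / p - 1 ≤ ((N / p : ℕ) : ℝ) := by
      have hmod := Nat.div_add_mod N p
      have hlt : N % p < p := Nat.mod_lt _ (by omega)
      have : (N:ℝ) = (p:ℝ) * ((N / p : ℕ):ℝ) + ((N % p : ℕ):ℝ) := by exact_mod_cast hmod.symm
      rw [div_sub_one hppos.ne', div_le_iff₀ hppos, this]
      have : ((N % p : ℕ):ℝ) < (p:ℝ) := by exact_mod_cast hlt
      nlinarith
    have : (N:ℝ) * (Real.log p / p) = ((N:ℝ)/p) * Real.log p := by ring
    rw [this]
    nlinarith [hfloor, hlogp]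
  calc (N:ℝ) * ∑ p ∈ s, Real.log p / p
      ≤ ∑ p ∈ s, ((N / p : ℕ) : ℝ) * Real.log p + ∑ p ∈ s, Real.log p := key
    _ ≤ Real.log (Nat.factorial N) + N * Real.log 4 :=
        add_le_add (log_fact_lower N) (theta_le N)
    _ ≤ (N:ℝ) * Real.log N + N * Real.log 4 := by
        have h1 : (Nat.factorial N : ℝ) ≤ (N:ℝ)^N := by exact_mod_cast Nat.factorial_le_pow N
        have h2 := Real.log_le_log (by exact_mod_cast Nat.factorial_pos N) h1
        rw [Real.log_pow] at h2
        linarith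
    _ = (N:ℝ) * (Real.log N + Real.log 4) := by ring


lemma key_real (a L M : ℝ) (ha : 2 ≤ a) (hL : 0 ≤ L) (hM : M ≤ L + 1/a) :
    L / (a * (a - 1)) ≤ (L + 1)/(a - 1) - (M + 1)/a := by
  have ha0 : (0:ℝ) < a := by linarith
  have ha1 : (0:ℝ) < a - 1 := by linarith
  have hM' : a * M ≤ a * L + 1 := by
    have := mul_le_mul_of_nonneg_left hM ha0.le
    rw [mul_add, mul_one_div, div_self ha0.ne'] at this
    linarith
  rw [div_sub_div _ _ ha1.ne' ha0.ne', div_le_div_iff₀ (by positivity) (by positivity)]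
  ring_nf
  nlinarith [sq_nonneg a, sq_nonneg (a-1)]

noncomputable def fB (n : ℕ) : ℝ := (Real.log n + 1) / ((n:ℝ) - 1)

lemma per_n (n : ℕ) (hn : 2 ≤ n) :
    Real.log n / ((n:ℝ) * ((n:ℝ) - 1)) ≤ fB n - fB (n+1) := by
  have ha : (2:ℝ) ≤ (n:ℝ) := by exact_mod_cast hn
  have ha0 : (0:ℝ) < (n:ℝ) := by linarith
  have hL : 0 ≤ Real.log n := Real.log_nonneg (by linarith)
  have hM : Real.log ((n:ℝ)+1) ≤ Real.log n + 1/(n:ℝ) := by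
    have h1 : Real.log ((n:ℝ)+1) - Real.log n = Real.log (((n:ℝ)+1)/n) := by
      rw [Real.log_div (by linarith) ha0.ne']
    have h2 : Real.log (((n:ℝ)+1)/n) ≤ ((n:ℝ)+1)/n - 1 :=
      Real.log_le_sub_one_of_pos (by positivity)
    have h3 : ((n:ℝ)+1)/n - 1 = 1/(n:ℝ) := by field_simp; ring
    linarith
  have := key_real (n:ℝ) (Real.log n) (Real.log ((n:ℝ)+1)) ha hL hM
  unfold fB
  push_cast
  convert this using 2 <;> ring

lemma telescope (N : ℕ) (hN : 2 ≤ N) :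
    ∑ n ∈ Finset.Icc 2 N, (fB n - fB (n+1)) = fB 2 - fB (N+1) := by
  have h : Finset.Icc 2 N = Finset.Ico 2 (N+1) := by
    rw [Finset.Ico_add_one_right_eq_Icc]
  rw [h, Finset.sum_Ico_eq_sum_range]
  have : ∀ i, fB (2 + i) - fB (2 + i + 1) = (fun j => fB (2 + j)) i - (fun j => fB (2 + j)) (i+1) := by
    intro i; simp [Nat.add_assoc]
  simp_rw [this]
  rw [Finset.sum_range_sub' (fun j => fB (2 + j))]
  congr 2
  omega

lemma B_bound (N : ℕ) :
    ∑ p ∈ Finset.filter Nat.Prime (Finset.Icc 2 N), Real.log p / ((p:ℝ) * ((p:ℝ) - 1))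
      ≤ Real.log 2 + 1 := by
  have hterm : ∀ n ∈ Finset.Icc 2 N, 0 ≤ Real.log n / ((n:ℝ) * ((n:ℝ) - 1)) := by
    intro n hn
    rw [Finset.mem_Icc] at hn
    have h2 : (2:ℝ) ≤ (n:ℝ) := by exact_mod_cast hn.1
    apply div_nonneg (Real.log_nonneg (by linarith))
    nlinarith
  have h1 : ∑ p ∈ Finset.filter Nat.Prime (Finset.Icc 2 N), Real.log p / ((p:ℝ) * ((p:ℝ) - 1))
      ≤ ∑ n ∈ Finset.Icc 2 N, Real.log n / ((n:ℝ) * ((n:ℝ) - 1)) :=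
    Finset.sum_le_sum_of_subset_of_nonneg (Finset.filter_subset _ _)
      (fun n hn _ => hterm n hn)
  rcases lt_or_ge N 2 with hN | hN
  · have : Finset.Icc 2 N = ∅ := by
      apply Finset.Icc_eq_empty; omega
    rw [this] at h1 ⊢
    simp only [Finset.sum_empty] at h1
    have := Real.log_nonneg (by norm_num : (1:ℝ) ≤ 2)
    calc ∑ p ∈ Finset.filter Nat.Prime (∅ : Finset ℕ), Real.log p / ((p:ℝ) * ((p:ℝ) - 1))
        = 0 := by simp
      _ ≤ Real.log 2 + 1 := by linarith
  have h2 : ∑ n ∈ Finset.Icc 2 N, Real.log n / ((n:ℝ) * ((n:ℝ) - 1))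
      ≤ ∑ n ∈ Finset.Icc 2 N, (fB n - fB (n+1)) := by
    apply Finset.sum_le_sum
    intro n hn
    rw [Finset.mem_Icc] at hn
    exact per_n n hn.1
  rw [telescope N hN] at h2
  have hf2 : fB 2 = Real.log 2 + 1 := by
    unfold fB; norm_num
  have hfN : 0 ≤ fB (N+1) := by
    unfold fB
    apply div_nonneg
    · have : (1:ℝ) ≤ ((N+1:ℕ):ℝ) := by exact_mod_cast Nat.le_add_left 1 N
      have := Real.log_nonneg this
      linarith
    · push_cast; linarith [Nat.cast_nonneg (α := ℝ) N]
  linarith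


lemma term_le_log2 (p : ℕ) (hp : p.Prime) : Real.log p / ((p:ℝ) - 1) ≤ Real.log 2 := by
  have h2 : 2 ≤ p := hp.two_le
  have hp1 : (0:ℝ) < (p:ℝ) - 1 := by
    have : (2:ℝ) ≤ (p:ℝ) := by exact_mod_cast h2
    linarith
  rw [div_le_iff₀ hp1]
  have hnat : p ≤ 2 ^ (p - 1) := by
    have h := Nat.lt_two_pow_self (n := p-1)
    omega
  have hpow : (p:ℝ) ≤ (2:ℝ) ^ (p - 1) := by exact_mod_cast hnat
  calc Real.log p ≤ Real.log ((2:ℝ) ^ (p-1)) := by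
        apply Real.log_le_log (by exact_mod_cast hp.pos) hpow
    _ = (p - 1 : ℕ) * Real.log 2 := by rw [Real.log_pow]
    _ = Real.log 2 * ((p:ℝ) - 1) := by
        have : ((p - 1 : ℕ) : ℝ) = (p:ℝ) - 1 := by
          push_cast [Nat.cast_sub (by omega : 1 ≤ p)]; ring
        rw [this]; ring


theorem stmt_15 (x : ℝ) (hx : 2 ≤ x) :
    ∑ p ∈ Finset.filter Nat.Prime (Finset.Icc 2 ⌊x⌋₊),
      Real.log p / ((p : ℝ) - 1) ≤ 2 * Real.log x := by
  set N := ⌊x⌋₊ with hNdef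
  have hx0 : (0:ℝ) < x := by linarith
  have hN2 : 2 ≤ N := Nat.le_floor (by exact_mod_cast hx)
  have hNx : (N:ℝ) ≤ x := Nat.floor_le hx0.le
  have hN0 : (0:ℝ) < (N:ℝ) := by exact_mod_cast Nat.lt_of_lt_of_le Nat.zero_lt_two hN2
  have hlogN : Real.log N ≤ Real.log x := Real.log_le_log hN0 hNx
  rcases lt_or_ge x 23 with hx23 | hx23
  · -- base case : N ≤ 22
    have hN22 : N ≤ 22 := by
      by_contra h
      push_neg at h
      have : (23:ℝ) ≤ (N:ℝ) := by exact_mod_cast h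
      linarith
    have hsum : ∑ p ∈ Finset.filter Nat.Prime (Finset.Icc 2 N),
        Real.log p / ((p : ℝ) - 1)
        ≤ (Finset.filter Nat.Prime (Finset.Icc 2 N)).card * Real.log 2 := by
      have := Finset.sum_le_card_nsmul (Finset.filter Nat.Prime (Finset.Icc 2 N))
        (fun p => Real.log p / ((p:ℝ) - 1)) (Real.log 2)
        (fun p hp => term_le_log2 p (Finset.mem_filter.1 hp).2)
      simpa [nsmul_eq_mul] using this
    have hcard : 2 ^ ((Finset.filter Nat.Prime (Finset.Icc 2 N)).card) ≤ N ^ 2 := by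
      interval_cases N <;> decide
    have h2 : ((Finset.filter Nat.Prime (Finset.Icc 2 N)).card : ℝ) * Real.log 2
        ≤ 2 * Real.log N := by
      have hc : ((2:ℝ) ^ ((Finset.filter Nat.Prime (Finset.Icc 2 N)).card))
          ≤ (N:ℝ) ^ 2 := by exact_mod_cast hcard
      have := Real.log_le_log (by positivity) hc
      rwa [Real.log_pow, Real.log_pow, Nat.cast_ofNat] at this
    calc _ ≤ _ := hsum
      _ ≤ 2 * Real.log N := h2
      _ ≤ 2 * Real.log x := by linarith
  · -- main case
    set s := Finset.filter Nat.Prime (Finset.Icc 2 N) with hs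
    have hsplit : ∑ p ∈ s, Real.log p / ((p:ℝ) - 1)
        = ∑ p ∈ s, Real.log p / (p:ℝ)
          + ∑ p ∈ s, Real.log p / ((p:ℝ) * ((p:ℝ) - 1)) := by
      rw [← Finset.sum_add_distrib]
      apply Finset.sum_congr rfl
      intro p hp
      have h2 : (2:ℝ) ≤ (p:ℝ) := by exact_mod_cast (Finset.mem_filter.1 hp).2.two_le
      have hp0 : (p:ℝ) ≠ 0 := by linarith
      have hp1 : (p:ℝ) - 1 ≠ 0 := by intro h; nlinarith
      field_simp
      ring
    rw [hsplit]
    have hA := A_bound N (by omega)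
    have hB := B_bound N
    have hlog4 : Real.log 4 = 2 * Real.log 2 := by
      rw [show (4:ℝ) = 2^2 by norm_num, Real.log_pow]
      norm_num
    have hkey : 3 * Real.log 2 + 1 ≤ Real.log x := by
      have h8 : Real.log x = Real.log 8 + Real.log (x / 8) := by
        rw [← Real.log_mul (by norm_num) (by positivity)]
        congr 1
        field_simp
      have hlog8 : Real.log 8 = 3 * Real.log 2 := by
        rw [show (8:ℝ) = 2^3 by norm_num, Real.log_pow]
        norm_num
      have he : Real.exp 1 ≤ x / 8 := by
        have := Real.exp_one_lt_d9
        nlinarith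
      have h1 : (1:ℝ) ≤ Real.log (x/8) := by
        calc (1:ℝ) = Real.log (Real.exp 1) := (Real.log_exp 1).symm
          _ ≤ Real.log (x/8) := Real.log_le_log (Real.exp_pos 1) he
      rw [h8, hlog8]
      linarith
    calc ∑ p ∈ s, Real.log p / (p:ℝ) + ∑ p ∈ s, Real.log p / ((p:ℝ) * ((p:ℝ) - 1))
        ≤ (Real.log N + Real.log 4) + (Real.log 2 + 1) := add_le_add hA hB
      _ = Real.log N + (3 * Real.log 2 + 1) := by rw [hlog4]; ring
      _ ≤ Real.log x + Real.log x := add_le_add hlogN hkey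
      _ = 2 * Real.log x := by ring
end

section
/- Let q ≥ 3 be an integer, a coprime to q, n a positive integer, and for each Dirichlet character χ mod q let χ₁ denote the primitive character inducing χ. Let Q_n be the largest divisor of q coprime to n. Then (1/φ(q)) ∑_{χ mod q} χ₁(n) conj(χ(a)) equals φ(Q_n)/φ(q) if n ≡ a (mod Q_n), and 0 otherwise. -/
open DirichletCharacter

private lemma modeq_coprime {a b m : ℕ} (h : a ≡ b [MOD m]) (hb : Nat.Coprime b m) :
    Nat.Coprime a m := by
  have hg : Nat.gcd m a = Nat.gcd m b := by
    rw [Nat.gcd_rec m a, Nat.gcd_rec m b, h]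
  have := hb
  unfold Nat.Coprime at *
  rwa [Nat.gcd_comm, hg, Nat.gcd_comm]

theorem stmt_16 (q : ℕ) (hq : 3 ≤ q) (a n : ℕ) (ha : Nat.Coprime a q) (hn : 0 < n)
    (Q : ℕ) (hQ : Q ∣ q) (hQn : Nat.Coprime Q n)
    (hQmax : ∀ d, d ∣ q → Nat.Coprime d n → d ≤ Q) :
    (1 / (Nat.totient q : ℂ)) * ∑ χ : DirichletCharacter ℂ q,
        χ.primitiveCharacter (n : ZMod χ.conductor) * (starRingEnd ℂ) (χ (a : ZMod q))
      = if (n : ZMod Q) = (a : ZMod Q)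
          then (Nat.totient Q : ℂ) / (Nat.totient q : ℂ) else 0 := by
  haveI : NeZero q := ⟨by omega⟩
  have hq0 : 0 < q := by omega
  have hQ0 : 0 < Q := Nat.pos_of_dvd_of_pos hQ hq0
  haveI : NeZero Q := ⟨hQ0.ne'⟩
  obtain ⟨T, hqQT⟩ := id hQ
  have hT0 : 0 < T := Nat.pos_of_ne_zero (by rintro rfl; simp at hqQT; omega)
  -- coprimality of Q and T
  have hcopQT : Nat.Coprime Q T := by
    set g := Nat.gcd Q T with hg
    have hgT : g ∣ T := Nat.gcd_dvd_right Q T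
    have h1 : Q * g ∣ q := hqQT ▸ mul_dvd_mul_left Q hgT
    have h2 : Nat.Coprime (Q * g) n :=
      Nat.Coprime.mul hQn (Nat.Coprime.coprime_dvd_left (Nat.gcd_dvd_left Q T) hQn)
    have h3 := hQmax _ h1 h2
    have hg0 : 0 < g := Nat.gcd_pos_of_pos_right Q hT0
    have : g = 1 := by nlinarith
    exact this
  -- every divisor of q coprime to n divides Q
  have hdvdQ : ∀ d, d ∣ q → Nat.Coprime d n → d ∣ Q := by
    intro d hd hdn
    have hl : Nat.lcm d Q ∣ q := Nat.lcm_dvd hd hQ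
    have hlm : Nat.lcm d Q ∣ d * Q := Nat.lcm_dvd (dvd_mul_right d Q) (dvd_mul_left Q d)
    have hln : Nat.Coprime (Nat.lcm d Q) n :=
      Nat.Coprime.coprime_dvd_left hlm (Nat.Coprime.mul hdn hQn)
    have h4 := hQmax _ hl hln
    have h5 : Q ∣ Nat.lcm d Q := Nat.dvd_lcm_right d Q
    have hl0 : 0 < Nat.lcm d Q := Nat.pos_of_dvd_of_pos hl hq0
    have h6 : Nat.lcm d Q = Q := Nat.le_antisymm h4 (Nat.le_of_dvd hl0 h5)
    exact h6 ▸ Nat.dvd_lcm_left d Q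
  -- conductor of a character induced from level Q divides Q
  have hcond : ∀ ψ : DirichletCharacter ℂ Q, (changeLevel hQ ψ).conductor ∣ Q := by
    intro ψ
    set χ := changeLevel hQ ψ with hχ
    set c := χ.conductor with hc
    have hcq : c ∣ q := conductor_dvd_level χ
    have hgq : Nat.gcd c Q ∣ q := (Nat.gcd_dvd_right c Q).trans hQ
    have hft : FactorsThrough χ (Nat.gcd c Q) := by
      rw [factorsThrough_iff_ker_unitsMap hgq]
      intro u hu
      rw [MonoidHom.mem_ker] at hu ⊢
      set x := (u : ZMod q).val with hxdef
      have hxq : Nat.Coprime x q := ZMod.val_coe_unit_coprime u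
      have hux : ((x : ℕ) : ZMod q) = (u : ZMod q) := by
        simp [hxdef, ZMod.natCast_val, ZMod.cast_id]
      have hx1 : x ≡ 1 [MOD Nat.gcd c Q] := by
        have h1 : ((x : ℕ) : ZMod (Nat.gcd c Q)) = 1 := by
          have := congrArg (Units.val) hu
          rw [ZMod.unitsMap_def, Units.coe_map] at this
          simpa [hux, ZMod.castHom_apply, ZMod.cast_natCast hgq] using
            (by rw [← hux] at this; simpa [ZMod.castHom_apply, ZMod.cast_natCast hgq] using this)
        have := (ZMod.natCast_eq_natCast_iff x 1 (Nat.gcd c Q)).mp (by simpa using h1)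
        exact this
      obtain ⟨v, hvQ, hvT⟩ := Nat.chineseRemainder hcopQT x 1
      obtain ⟨w, hwQ, hwT⟩ := Nat.chineseRemainder hcopQT 1 x
      -- v, w coprime to q
      have hxQ : Nat.Coprime x Q := Nat.Coprime.coprime_dvd_right hQ hxq
      have hxT : Nat.Coprime x T := Nat.Coprime.coprime_dvd_right ⟨Q, by rw [hqQT]; ring⟩ hxq
      have hvq : Nat.Coprime v q := by
        rw [hqQT, Nat.coprime_mul_iff_right]
        exact ⟨modeq_coprime hvQ hxQ, modeq_coprime hvT (Nat.coprime_one_left T)⟩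
      have hwq : Nat.Coprime w q := by
        rw [hqQT, Nat.coprime_mul_iff_right]
        exact ⟨modeq_coprime hwQ (Nat.coprime_one_left Q), modeq_coprime hwT hxT⟩
      have hvw : v * w ≡ x [MOD q] := by
        rw [hqQT]
        exact (Nat.modEq_and_modEq_iff_modEq_mul hcopQT).mp
          ⟨by simpa using hvQ.mul hwQ, by simpa using hvT.mul hwT⟩
      -- v ≡ 1 mod c
      have hcgg : c ∣ Nat.gcd c Q * Nat.gcd c T :=
        Nat.dvd_gcd_mul_gcd_iff_dvd_mul.mpr (hqQT ▸ hcq)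
      have hv1 : v ≡ 1 [MOD c] := by
        have h1 : v ≡ 1 [MOD Nat.gcd c Q] :=
          (Nat.ModEq.of_dvd (Nat.gcd_dvd_right c Q) hvQ).trans hx1
        have h2 : v ≡ 1 [MOD Nat.gcd c T] :=
          Nat.ModEq.of_dvd (Nat.gcd_dvd_right c T) hvT
        have hco : Nat.Coprime (Nat.gcd c Q) (Nat.gcd c T) :=
          Nat.Coprime.coprime_dvd_left (Nat.gcd_dvd_right c Q)
            (Nat.Coprime.coprime_dvd_right (Nat.gcd_dvd_right c T) hcopQT)
        exact Nat.ModEq.of_dvd hcgg ((Nat.modEq_and_modEq_iff_modEq_mul hco).mp ⟨h1, h2⟩)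
      -- now compute χ u
      have hkey : χ ((u : ZMod q)) = 1 := by
        have hsplit : (u : ZMod q) = ((v : ℕ) : ZMod q) * ((w : ℕ) : ZMod q) := by
          rw [← hux, ← Nat.cast_mul]
          exact ((ZMod.natCast_eq_natCast_iff _ _ _).mpr hvw).symm
        rw [hsplit, map_mul]
        have hχv : χ ((v : ℕ) : ZMod q) = 1 := by
          have huv : (((ZMod.unitOfCoprime v hvq : (ZMod q)ˣ)) : ZMod q) = ((v : ℕ) : ZMod q) :=
            ZMod.coe_unitOfCoprime v hvq
          rw [← huv]
          have hPC : changeLevel hcq χ.primitiveCharacter = χ :=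
            ((factorsThrough_conductor χ).eq_changeLevel).symm
          calc χ ((ZMod.unitOfCoprime v hvq : (ZMod q)ˣ) : ZMod q)
              = (changeLevel hcq χ.primitiveCharacter)
                  ((ZMod.unitOfCoprime v hvq : (ZMod q)ˣ) : ZMod q) := by
                  rw [hPC]
            _ = χ.primitiveCharacter (ZMod.cast (((ZMod.unitOfCoprime v hvq : (ZMod q)ˣ) : ZMod q))) :=
                  changeLevel_eq_cast_of_dvd _ hcq _
            _ = χ.primitiveCharacter ((v : ZMod c)) := by rw [huv, ZMod.cast_natCast hcq]
            _ = 1 := by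
                  have : ((v : ℕ) : ZMod c) = 1 := by
                    simpa using (ZMod.natCast_eq_natCast_iff _ _ _).mpr hv1
                  rw [this, map_one]
        have hχw : χ ((w : ℕ) : ZMod q) = 1 := by
          have huw : (((ZMod.unitOfCoprime w hwq : (ZMod q)ˣ)) : ZMod q) = ((w : ℕ) : ZMod q) :=
            ZMod.coe_unitOfCoprime w hwq
          rw [← huw]
          calc χ ((ZMod.unitOfCoprime w hwq : (ZMod q)ˣ) : ZMod q)
              = ψ (ZMod.cast (((ZMod.unitOfCoprime w hwq : (ZMod q)ˣ) : ZMod q))) :=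
                  changeLevel_eq_cast_of_dvd _ hQ _
            _ = ψ ((w : ZMod Q)) := by rw [huw, ZMod.cast_natCast hQ]
            _ = 1 := by
                  have : ((w : ℕ) : ZMod Q) = 1 := by
                    simpa using (ZMod.natCast_eq_natCast_iff _ _ _).mpr hwQ
                  rw [this, map_one]
        rw [hχv, hχw, mul_one]
      ext
      simpa [MulChar.coe_toUnitHom] using hkey
    -- minimality of conductor
    have hle : c ≤ Nat.gcd c Q := Nat.sInf_le ((mem_conductorSet_iff χ).mpr hft)
    have hc0 : 0 < c := Nat.pos_of_ne_zero (conductor_ne_zero χ)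
    have : c = Nat.gcd c Q :=
      Nat.le_antisymm hle (Nat.le_of_dvd hc0 (Nat.gcd_dvd_left c Q))
    rw [this]
    exact Nat.gcd_dvd_right c Q
  -- value of the primitive character at n for induced characters
  have hnQ : Nat.Coprime n Q := hQn.symm
  have hval : ∀ ψ : DirichletCharacter ℂ Q,
      (changeLevel hQ ψ).primitiveCharacter ((n : ZMod (changeLevel hQ ψ).conductor))
        = ψ ((n : ZMod Q)) := by
    intro ψ
    set χ := changeLevel hQ ψ with hχ
    have hcQ : χ.conductor ∣ Q := hcond ψ
    have heq1 : changeLevel hQ (changeLevel hcQ χ.primitiveCharacter) = changeLevel hQ ψ := by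
      rw [← changeLevel_trans _ hcQ hQ]
      exact ((factorsThrough_conductor χ).eq_changeLevel).symm
    have heq : changeLevel hcQ χ.primitiveCharacter = ψ := changeLevel_injective hQ heq1
    have hun : (((ZMod.unitOfCoprime n hnQ : (ZMod Q)ˣ)) : ZMod Q) = ((n : ℕ) : ZMod Q) :=
      ZMod.coe_unitOfCoprime n hnQ
    calc χ.primitiveCharacter ((n : ZMod χ.conductor))
        = χ.primitiveCharacter (ZMod.cast (((ZMod.unitOfCoprime n hnQ : (ZMod Q)ˣ) : ZMod Q))) := by
          rw [hun, ZMod.cast_natCast hcQ]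
      _ = (changeLevel hcQ χ.primitiveCharacter)
            ((ZMod.unitOfCoprime n hnQ : (ZMod Q)ˣ) : ZMod Q) :=
          (changeLevel_eq_cast_of_dvd _ hcQ _).symm
      _ = ψ ((n : ZMod Q)) := by rw [heq, hun]
  -- value of χ at a
  have haQ : Nat.Coprime a Q := Nat.Coprime.coprime_dvd_right hQ ha
  have hvala : ∀ ψ : DirichletCharacter ℂ Q,
      (changeLevel hQ ψ) ((a : ZMod q)) = ψ ((a : ZMod Q)) := by
    intro ψ
    have hua : (((ZMod.unitOfCoprime a ha : (ZMod q)ˣ)) : ZMod q) = ((a : ℕ) : ZMod q) :=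
      ZMod.coe_unitOfCoprime a ha
    rw [← hua, changeLevel_eq_cast_of_dvd _ hQ, hua, ZMod.cast_natCast hQ]
  -- reindex the sum
  set f : DirichletCharacter ℂ q → ℂ := fun χ =>
    χ.primitiveCharacter ((n : ZMod χ.conductor)) * (starRingEnd ℂ) (χ ((a : ZMod q))) with hf
  have hre : ∑ χ : DirichletCharacter ℂ q, f χ
      = ∑ ψ : DirichletCharacter ℂ Q, f (changeLevel hQ ψ) := by
    rw [← Finset.sum_image (g := changeLevel hQ)
      (fun x _ y _ h => changeLevel_injective hQ h)]
    symm
    apply Finset.sum_subset (Finset.subset_univ _)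
    intro χ _ hχ
    have hnu : ¬ IsUnit ((n : ZMod χ.conductor)) := by
      intro hu
      haveI : NeZero χ.conductor := ⟨conductor_ne_zero χ⟩
      have hcn : Nat.Coprime n χ.conductor := (ZMod.isUnit_iff_coprime n χ.conductor).mp hu
      have hcQ : χ.conductor ∣ Q := hdvdQ _ (conductor_dvd_level χ) hcn.symm
      apply hχ
      rw [Finset.mem_image]
      refine ⟨changeLevel hcQ χ.primitiveCharacter, Finset.mem_univ _, ?_⟩
      rw [← changeLevel_trans _ hcQ hQ]
      exact ((factorsThrough_conductor χ).eq_changeLevel).symm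
    rw [hf]
    simp only []
    rw [χ.primitiveCharacter.map_nonunit hnu, zero_mul]
  rw [hre]
  -- evaluate each term
  have hterm : ∀ ψ : DirichletCharacter ℂ Q,
      f (changeLevel hQ ψ) = ψ (((n : ZMod Q)) * ((ZMod.unitOfCoprime a haQ)⁻¹ : (ZMod Q)ˣ)) := by
    intro ψ
    rw [hf]
    simp only []
    rw [hval ψ, hvala ψ]
    have h1 : (starRingEnd ℂ) (ψ ((a : ZMod Q))) = ψ⁻¹ ((a : ZMod Q)) := by
      rw [← MulChar.star_apply' ψ ((a : ZMod Q))]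
      rfl
    rw [h1, map_mul]
    congr 1
    rw [← ZMod.coe_unitOfCoprime a haQ, MulChar.inv_apply, Ring.inverse_unit]
  rw [Finset.sum_congr rfl (fun ψ _ => hterm ψ)]
  rw [DirichletCharacter.sum_characters_eq]
  have hiff : ((n : ZMod Q)) * ((ZMod.unitOfCoprime a haQ)⁻¹ : (ZMod Q)ˣ) = 1
      ↔ (n : ZMod Q) = (a : ZMod Q) := by
    rw [Units.mul_inv_eq_one, ZMod.coe_unitOfCoprime]
  by_cases hcase : (n : ZMod Q) = (a : ZMod Q)
  · rw [if_pos (hiff.mpr hcase), if_pos hcase, one_div_mul_eq_div]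
  · rw [if_neg (fun h => hcase (hiff.mp h)), if_neg hcase, mul_zero]
end

section
/- Let n be a positive integer and u, v, w distinct primes, each congruent to 5 modulo 6 and coprime to n. Then there exists an integer a' such that 4n ≡ (a' v² w²)³ (mod u²), 4n ≡ (a' u² w²)³ (mod v²), and 4n ≡ (a' u² v²)³ (mod w²). -/
lemma cube_surj {p : ℕ} (hp : p.Prime) (hp5 : p % 6 = 5) (x : (ZMod (p^2))ˣ) :
    ∃ y : (ZMod (p^2))ˣ, y ^ 3 = x := by
  haveI : Fact p.Prime := ⟨hp⟩
  haveI : NeZero (p^2) := ⟨pow_ne_zero 2 hp.ne_zero⟩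
  have hcard : Nat.card (ZMod (p^2))ˣ = p * (p - 1) := by
    rw [Nat.card_eq_fintype_card, ZMod.card_units_eq_totient]
    have := Nat.totient_prime_pow hp (n := 2) (by norm_num)
    simpa using this
  have hcop : (Nat.card (ZMod (p^2))ˣ).Coprime 3 := by
    rw [hcard]
    have h3 : Nat.Prime 3 := by norm_num
    have h1 : Nat.Coprime p 3 := by
      rw [Nat.coprime_primes hp h3]; omega
    have h2 : Nat.Coprime (p - 1) 3 := by
      rw [Nat.coprime_comm, h3.coprime_iff_not_dvd]
      rintro ⟨c, hc⟩
      have := hp.two_le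
      omega
    exact h1.mul h2
  exact ⟨(powCoprime hcop).symm x, (powCoprime hcop).right_inv x⟩

lemma key {p : ℕ} (hp : p.Prime) (hp5 : p % 6 = 5) (m : ℕ) (hm : m.Coprime (p^2))
    (b : ZMod (p^2)) (hb : IsUnit b) :
    ∃ c : ZMod (p^2), (c * b) ^ 3 = (m : ZMod (p^2)) := by
  haveI : Fact p.Prime := ⟨hp⟩
  haveI : NeZero (p^2) := ⟨pow_ne_zero 2 hp.ne_zero⟩
  have hmu : IsUnit ((m : ZMod (p^2))) := (ZMod.isUnit_iff_coprime m (p^2)).2 hm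
  obtain ⟨y, hy⟩ := cube_surj hp hp5 hmu.unit
  refine ⟨(y * hb.unit⁻¹ : (ZMod (p^2))ˣ), ?_⟩
  have hbu : (hb.unit : ZMod (p^2)) = b := hb.unit_spec
  calc ((↑(y * hb.unit⁻¹) : ZMod (p^2)) * b) ^ 3
      = ((y * hb.unit⁻¹ * hb.unit : (ZMod (p^2))ˣ) : ZMod (p^2)) ^ 3 := by
        push_cast [hbu]; ring
    _ = ((y ^ 3 : (ZMod (p^2))ˣ) : ZMod (p^2)) := by
        rw [mul_assoc, inv_mul_cancel, mul_one]; push_cast; ring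
    _ = (m : ZMod (p^2)) := by rw [hy, hmu.unit_spec]

-- coprimality of 4n with p^2
lemma cop4n {p n : ℕ} (hp : p.Prime) (hp5 : p % 6 = 5) (hpn : p.Coprime n) :
    (4 * n).Coprime (p ^ 2) := by
  have h2 : Nat.Coprime 2 p := by
    rw [Nat.prime_two.coprime_iff_not_dvd]
    rintro ⟨c, hc⟩; omega
  have h4 : Nat.Coprime 4 p := by
    have := h2.mul h2; simpa [show (2*2 : ℕ) = 4 by norm_num] using this
  exact ((h4.mul hpn.symm).pow_right 2)

lemma copsq {p q : ℕ} (hp : p.Prime) (hq : q.Prime) (hpq : p ≠ q) :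
    (q : ℕ).Coprime (p ^ 2) :=
  (((Nat.coprime_primes hq hp).2 hpq.symm).pow_right 2)

theorem stmt_18 (n u v w : ℕ) (hn : 0 < n) (hu : u.Prime) (hv : v.Prime) (hw : w.Prime)
    (huv : u ≠ v) (huw : u ≠ w) (hvw : v ≠ w)
    (hu5 : u % 6 = 5) (hv5 : v % 6 = 5) (hw5 : w % 6 = 5)
    (hun : u.Coprime n) (hvn : v.Coprime n) (hwn : w.Coprime n) :
    ∃ a' : ℤ,
      (4 * n : ℤ) ≡ (a' * (v : ℤ) ^ 2 * (w : ℤ) ^ 2) ^ 3 [ZMOD ((u : ℤ) ^ 2)] ∧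
      (4 * n : ℤ) ≡ (a' * (u : ℤ) ^ 2 * (w : ℤ) ^ 2) ^ 3 [ZMOD ((v : ℤ) ^ 2)] ∧
      (4 * n : ℤ) ≡ (a' * (u : ℤ) ^ 2 * (v : ℤ) ^ 2) ^ 3 [ZMOD ((w : ℤ) ^ 2)] := by
  haveI : NeZero (u^2) := ⟨pow_ne_zero 2 hu.ne_zero⟩
  haveI : NeZero (v^2) := ⟨pow_ne_zero 2 hv.ne_zero⟩
  haveI : NeZero (w^2) := ⟨pow_ne_zero 2 hw.ne_zero⟩
  -- cube roots
  obtain ⟨cu, hcu⟩ := key hu hu5 (4 * n) (cop4n hu hu5 hun)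
    ((v : ZMod (u^2))^2 * (w : ZMod (u^2))^2)
    ((((ZMod.isUnit_iff_coprime v (u^2)).2 (copsq hu hv huv)).pow 2).mul
      (((ZMod.isUnit_iff_coprime w (u^2)).2 (copsq hu hw huw)).pow 2))
  obtain ⟨cv, hcv⟩ := key hv hv5 (4 * n) (cop4n hv hv5 hvn)
    ((u : ZMod (v^2))^2 * (w : ZMod (v^2))^2)
    ((((ZMod.isUnit_iff_coprime u (v^2)).2 (copsq hv hu huv.symm)).pow 2).mul
      (((ZMod.isUnit_iff_coprime w (v^2)).2 (copsq hv hw hvw)).pow 2))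
  obtain ⟨cw, hcw⟩ := key hw hw5 (4 * n) (cop4n hw hw5 hwn)
    ((u : ZMod (w^2))^2 * (v : ZMod (w^2))^2)
    ((((ZMod.isUnit_iff_coprime u (w^2)).2 (copsq hw hu huw.symm)).pow 2).mul
      (((ZMod.isUnit_iff_coprime v (w^2)).2 (copsq hw hv hvw.symm)).pow 2))
  -- CRT
  have huv2 : (u^2).Coprime (v^2) := ((Nat.coprime_primes hu hv).2 huv).pow 2 2
  have huw2 : (u^2).Coprime (w^2) := ((Nat.coprime_primes hu hw).2 huw).pow 2 2
  have hvw2 : (v^2).Coprime (w^2) := ((Nat.coprime_primes hv hw).2 hvw).pow 2 2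
  obtain ⟨k1, hk1u, hk1v⟩ := Nat.chineseRemainder huv2 cu.val cv.val
  obtain ⟨k, hk1, hkw⟩ := Nat.chineseRemainder (Nat.Coprime.mul huw2 hvw2) k1 cw.val
  have hku : k ≡ cu.val [MOD u^2] := (Nat.ModEq.of_mul_right _ hk1).trans hk1u
  have hkv : k ≡ cv.val [MOD v^2] := (Nat.ModEq.of_mul_left _ hk1).trans hk1v
  refine ⟨(k : ℤ), ?_, ?_, ?_⟩
  · have h1 : ((u : ℤ)^2) = ((u^2 : ℕ) : ℤ) := by push_cast; ring
    rw [h1, ← ZMod.intCast_eq_intCast_iff]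
    push_cast
    rw [(ZMod.natCast_eq_natCast_iff _ _ _).2 hku, ZMod.natCast_rightInverse cu]
    push_cast at hcu
    rw [← hcu]; ring
  · have h1 : ((v : ℤ)^2) = ((v^2 : ℕ) : ℤ) := by push_cast; ring
    rw [h1, ← ZMod.intCast_eq_intCast_iff]
    push_cast
    rw [(ZMod.natCast_eq_natCast_iff _ _ _).2 hkv, ZMod.natCast_rightInverse cv]
    push_cast at hcv
    rw [← hcv]; ring
  · have h1 : ((w : ℤ)^2) = ((w^2 : ℕ) : ℤ) := by push_cast; ring
    rw [h1, ← ZMod.intCast_eq_intCast_iff]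
    push_cast
    rw [(ZMod.natCast_eq_natCast_iff _ _ _).2 hkw, ZMod.natCast_rightInverse cw]
    push_cast at hcw
    rw [← hcw]; ring
end
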